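/- Let p be an odd prime and let A = Z[S] be a polynomial ring over Z on a set S of variables. Define G̃(A) as the free abelian group on symbols V^n_a (n ≥ 0, 0 ≠ a ∈ A, with V^n_0 := 0), and H(A) ⊆ G̃(A) the subgroup generated by all elements (V^n_{(x+y)^p} − pV^{n-1}_{x+y}) − (V^n_{x^p} − pV^{n-1}_x) − (V^n_{y^p} − pV^{n-1}_y) and V^n_a + V^n_{-a}. Let η̃ : G̃(A) → X(A) ⊆ A^ℕ be the homomorphism V^n_a ↦ V^n⟨a⟩. Then the kernel of η̃ equals the p-saturation H̃(A) = {α ∈ G̃(A) : p^ℓ α ∈ H(A) for some ℓ ≥ 0}. -/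

import Mathlib

open scoped Classical

/-- The Teichmüller sequence `⟨a⟩ = (a, a^p, a^{p^2}, ...)` in `A^ℕ`. -/
def teich (p : ℕ) {A : Type*} [CommRing A] (a : A) : ℕ → A := fun k => a ^ p ^ k

/-- The Verschiebung `V(r_0, r_1, ...) = p • (0, r_0, r_1, ...)` on `A^ℕ`. -/
def Vmap (p : ℕ) {A : Type*} [CommRing A] : (ℕ → A) → (ℕ → A) :=
  fun r k => match k with
  | 0 => 0
  | m + 1 => (p : A) * r m

/-- `G̃(A)`: the free abelian group on the symbols `V^n_a` for `n ≥ 0` and `0 ≠ a ∈ A`. -/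
def Gt (A : Type*) [CommRing A] := FreeAbelianGroup (ℕ × {a : A // a ≠ 0})

noncomputable instance (A : Type*) [CommRing A] : AddCommGroup (Gt A) :=
  inferInstanceAs (AddCommGroup (FreeAbelianGroup (ℕ × {a : A // a ≠ 0})))

/-- The symbol `V^n_a ∈ G̃(A)`, with the convention `V^n_0 := 0`. -/
noncomputable def gen {A : Type*} [CommRing A] (n : ℕ) (a : A) : Gt A :=
  if h : a = 0 then 0 else FreeAbelianGroup.of (n, ⟨a, h⟩)

/-- The subgroup `H(A) ⊆ G̃(A)` generated by the additivity relations for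
`x ↦ V^n_{x^p} - p V^{n-1}_x` and by the relations `V^n_a + V^n_{-a}`. -/
noncomputable def HA (p : ℕ) (A : Type*) [CommRing A] : AddSubgroup (Gt A) :=
  AddSubgroup.closure
    ({g | ∃ (n : ℕ) (x y : A),
        g = (gen (n + 1) ((x + y) ^ p) - p • gen n (x + y))
            - (gen (n + 1) (x ^ p) - p • gen n x)
            - (gen (n + 1) (y ^ p) - p • gen n y)} ∪
     {g | ∃ (n : ℕ) (a : A), g = gen n a + gen n (-a)})

/-- The homomorphism `η̃ : G̃(A) → A^ℕ`, `V^n_a ↦ V^n⟨a⟩` (its image lies in `X(A)`). -/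
noncomputable def etaT (p : ℕ) (A : Type*) [CommRing A] : Gt A →+ (ℕ → A) :=
  FreeAbelianGroup.lift fun x : ℕ × {a : A // a ≠ 0} => (Vmap p)^[x.1] (teich p (x.2 : A))

/-! ### Auxiliary development -/

section Aux

variable (p : ℕ) {A : Type*} [CommRing A]

lemma gen_zero (n : ℕ) : gen n (0 : A) = 0 := dif_pos rfl

lemma gen_ne (n : ℕ) {a : A} (h : a ≠ 0) :
    gen n a = FreeAbelianGroup.of (n, ⟨a, h⟩) := dif_neg h

/-- The element `w_n(x) = V^{n+1}_{x^p} - p V^n_x`. -/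
noncomputable def wgen (n : ℕ) (x : A) : Gt A := gen (n + 1) (x ^ p) - p • gen n x

lemma wgen_rel_mem (n : ℕ) (x y : A) :
    wgen p n (x + y) - wgen p n x - wgen p n y ∈ HA p A :=
  AddSubgroup.subset_closure (Or.inl ⟨n, x, y, rfl⟩)

lemma sign_rel_mem (n : ℕ) (a : A) :
    gen n a + gen n (-a) ∈ HA p A :=
  AddSubgroup.subset_closure (Or.inr ⟨n, a, rfl⟩)

lemma Vmap_zero : Vmap p (0 : ℕ → A) = 0 := by
  funext k; cases k <;> simp [Vmap]

lemma Vmap_iterate_zero (n : ℕ) : (Vmap p)^[n] (0 : ℕ → A) = 0 := by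
  induction n with
  | zero => rfl
  | succ n ih => rw [Function.iterate_succ_apply, Vmap_zero, ih]

lemma Vmap_iterate_apply (n : ℕ) (r : ℕ → A) (k : ℕ) :
    (Vmap p)^[n] r k = if n ≤ k then (p : A) ^ n * r (k - n) else 0 := by
  induction n generalizing k with
  | zero => simp
  | succ n ih =>
    rw [Function.iterate_succ_apply']
    cases k with
    | zero => simp [Vmap]
    | succ m =>
      show (p : A) * (Vmap p)^[n] r m = _
      rw [ih]
      by_cases h : n ≤ m
      · rw [if_pos h, if_pos (by omega : n + 1 ≤ m + 1)]
        have : m + 1 - (n + 1) = m - n := by omega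
        rw [this, pow_succ]; ring
      · rw [if_neg h, if_neg (by omega), mul_zero]

variable {p}

lemma teich_zero (hp : p ≠ 0) : teich p (0 : A) = 0 := by
  funext k; simp [teich, zero_pow (pow_ne_zero k hp)]

lemma etaT_gen (hp : p ≠ 0) (n : ℕ) (a : A) :
    etaT p A (gen n a) = (Vmap p)^[n] (teich p a) := by
  by_cases h : a = 0
  · subst h
    rw [gen_zero, map_zero, teich_zero hp, Vmap_iterate_zero]
  · rw [gen_ne n h]
    exact FreeAbelianGroup.lift_apply_of _ _

lemma etaT_gen_apply (hp : p ≠ 0) (n : ℕ) (a : A) (k : ℕ) :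
    etaT p A (gen n a) k = if n ≤ k then (p : A) ^ n * a ^ p ^ (k - n) else 0 := by
  rw [etaT_gen hp, Vmap_iterate_apply]; rfl

lemma etaT_wgen_apply (hp : p ≠ 0) (n : ℕ) (x : A) (k : ℕ) :
    etaT p A (wgen p n x) k = if k = n then -((p : A) ^ (n + 1) * x) else 0 := by
  rw [wgen, map_sub, map_nsmul]
  have h1 := etaT_gen_apply hp (n + 1) (x ^ p) k
  have h2 := etaT_gen_apply hp n x k
  show etaT p A (gen (n + 1) (x ^ p)) k - p • etaT p A (gen n x) k = _
  rw [h1, h2]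
  rcases lt_trichotomy k n with h | h | h
  · rw [if_neg (by omega), if_neg (by omega), if_neg (by omega)]
    simp
  · subst h
    rw [if_neg (by omega), if_pos (le_refl k), if_pos rfl]
    simp [pow_succ]; ring
  · rw [if_pos (by omega), if_pos (by omega), if_neg (by omega)]
    have hx : (x ^ p) ^ p ^ (k - (n + 1)) = x ^ p ^ (k - n) := by
      rw [← pow_mul, ← pow_succ']
      congr 2
      omega
    rw [hx, pow_succ]
    simp; ring

lemma etaT_HA (hodd : Odd p) {x : Gt A} (hx : x ∈ HA p A) : etaT p A x = 0 := by
  have hp : p ≠ 0 := by rintro rfl; simp at hodd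
  have : HA p A ≤ (etaT p A).ker := by
    rw [HA, AddSubgroup.closure_le]
    rintro g (⟨n, x, y, rfl⟩ | ⟨n, a, rfl⟩)
    · have : ((gen (n + 1) ((x + y) ^ p) - p • gen n (x + y))
            - (gen (n + 1) (x ^ p) - p • gen n x)
            - (gen (n + 1) (y ^ p) - p • gen n y))
          = wgen p n (x + y) - wgen p n x - wgen p n y := rfl
      rw [SetLike.mem_coe, AddMonoidHom.mem_ker, this, map_sub, map_sub]
      funext k
      show etaT p A (wgen p n (x + y)) k - etaT p A (wgen p n x) k
          - etaT p A (wgen p n y) k = 0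
      rw [etaT_wgen_apply hp, etaT_wgen_apply hp, etaT_wgen_apply hp]
      by_cases h : k = n
      · rw [if_pos h, if_pos h, if_pos h]; ring
      · rw [if_neg h, if_neg h, if_neg h]; ring
    · rw [SetLike.mem_coe, AddMonoidHom.mem_ker, map_add]
      funext k
      show etaT p A (gen n a) k + etaT p A (gen n (-a)) k = 0
      rw [etaT_gen_apply hp, etaT_gen_apply hp]
      by_cases h : n ≤ k
      · rw [if_pos h, if_pos h]
        have : (-a) ^ p ^ (k - n) = -(a ^ p ^ (k - n)) := (hodd.pow).neg_pow a
        rw [this]; ring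
      · rw [if_neg h, if_neg h, add_zero]
  exact this hx

end Aux

section Aux2

variable (p : ℕ) {A : Type*} [CommRing A]

/-- The shift `V^n_a ↦ V^{n+1}_a`. -/
noncomputable def sh : Gt A →+ Gt A :=
  FreeAbelianGroup.lift fun x : ℕ × {a : A // a ≠ 0} =>
    FreeAbelianGroup.of (x.1 + 1, x.2)

lemma sh_gen (n : ℕ) (a : A) : sh (gen n a) = gen (n + 1) a := by
  by_cases h : a = 0
  · subst h; rw [gen_zero, gen_zero, map_zero]
  · rw [gen_ne n h, gen_ne (n + 1) h]
    exact FreeAbelianGroup.lift_apply_of _ _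

lemma sh_mem_HA {x : Gt A} (hx : x ∈ HA p A) : sh x ∈ HA p A := by
  have : HA p A ≤ (HA p A).comap (sh (A := A)) := by
    rw [HA, AddSubgroup.closure_le]
    rintro g (⟨n, x, y, rfl⟩ | ⟨n, a, rfl⟩) <;>
      simp only [SetLike.mem_coe, AddSubgroup.mem_comap, map_sub, map_add, map_nsmul, sh_gen]
    · exact AddSubgroup.subset_closure (Or.inl ⟨n + 1, x, y, rfl⟩)
    · exact AddSubgroup.subset_closure (Or.inr ⟨n + 1, a, rfl⟩)
  exact this hx

lemma Vmap_add (r s : ℕ → A) : Vmap p (r + s) = Vmap p r + Vmap p s := by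
  funext k; cases k <;> simp [Vmap, mul_add]

lemma Vmap_neg (r : ℕ → A) : Vmap p (-r) = -Vmap p r := by
  funext k; cases k <;> simp [Vmap]

lemma etaT_sh (x : Gt A) : etaT p A (sh x) = Vmap p (etaT p A x) := by
  refine FreeAbelianGroup.induction_on x ?_ ?_ ?_ ?_
  · show etaT p A (sh (0 : Gt A)) = Vmap p (etaT p A (0 : Gt A))
    rw [map_zero, map_zero, Vmap_zero]
  · intro t
    have h1 : sh (FreeAbelianGroup.of t : Gt A) = FreeAbelianGroup.of (t.1 + 1, t.2) :=
      FreeAbelianGroup.lift_apply_of _ _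
    have h2 : etaT p A (FreeAbelianGroup.of t) = (Vmap p)^[t.1] (teich p (t.2 : A)) :=
      FreeAbelianGroup.lift_apply_of _ _
    have h3 : etaT p A (FreeAbelianGroup.of (t.1 + 1, t.2)) =
        (Vmap p)^[t.1 + 1] (teich p (t.2 : A)) :=
      FreeAbelianGroup.lift_apply_of _ _
    rw [h1, h2, h3]
    exact Function.iterate_succ_apply' (Vmap p) t.1 (teich p (t.2 : A))
  · intro t ih
    show etaT p A (sh (@Neg.neg (Gt A) _ (FreeAbelianGroup.of t))) =
      Vmap p (etaT p A (@Neg.neg (Gt A) _ (FreeAbelianGroup.of t)))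
    erw [map_neg, map_neg, map_neg, Vmap_neg, ih]
  · intro t s iht ihs
    show etaT p A (sh (@HAdd.hAdd (Gt A) (Gt A) (Gt A) _ t s)) =
      Vmap p (etaT p A (@HAdd.hAdd (Gt A) (Gt A) (Gt A) _ t s))
    erw [map_add, map_add, map_add, Vmap_add, iht, ihs]

/-- `w_n` descends to a homomorphism `A →+ G̃(A)/H(A)`. -/
noncomputable def Wq (n : ℕ) : A →+ (Gt A ⧸ HA p A) :=
  AddMonoidHom.mk' (fun x => QuotientAddGroup.mk' (HA p A) (wgen p n x)) (by
    intro x y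
    rw [← map_add, QuotientAddGroup.mk'_eq_mk']
    exact ⟨-(wgen p n (x + y) - wgen p n x - wgen p n y),
      AddSubgroup.neg_mem _ (wgen_rel_mem p n x y), by abel⟩)

lemma sum_wgen_mem (n : ℕ) (u : A →₀ ℤ) (h : (u.sum fun a c => c • a) = 0) :
    (u.sum fun a c => c • wgen p n a) ∈ HA p A := by
  have key : QuotientAddGroup.mk' (HA p A) (u.sum fun a c => c • wgen p n a) = 0 := by
    rw [map_finsuppSum]
    have e1 : ∀ a c, QuotientAddGroup.mk' (HA p A) ((c : ℤ) • wgen p n a)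
        = Wq p n (c • a) := by
      intro a c
      rw [map_zsmul, map_zsmul]
      rfl
    calc (u.sum fun a c => QuotientAddGroup.mk' (HA p A) (c • wgen p n a))
        = u.sum fun a c => Wq p n (c • a) := by
          apply Finsupp.sum_congr
          intro a _
          exact e1 a (u a)
      _ = Wq p n (u.sum fun a c => c • a) := (map_finsuppSum (Wq p n) u _).symm
      _ = 0 := by rw [h, map_zero]
  rwa [← QuotientAddGroup.eq_zero_iff, ← QuotientAddGroup.mk'_apply]

end Aux2

section Phi

variable {A : Type*} [CommRing A]

/-- `c ↦ c • gen q.1 q.2` as an `AddMonoidHom`. -/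
noncomputable def genHom (q : ℕ × A) : ℤ →+ Gt A :=
  AddMonoidHom.mk' (fun c => c • gen q.1 q.2) (fun c d => add_zsmul _ c d)

/-- Interpretation of a formal `ℤ`-combination of symbols in `G̃(A)`. -/
noncomputable def Phi : ((ℕ × A) →₀ ℤ) →+ Gt A :=
  Finsupp.liftAddHom genHom

lemma Phi_apply (f : (ℕ × A) →₀ ℤ) : Phi f = f.sum fun q c => c • gen q.1 q.2 := by
  unfold Phi
  exact Finsupp.liftAddHom_apply (α := ℕ × A) (M := ℤ) (N := Gt A) genHom f

lemma Phi_single (q : ℕ × A) (c : ℤ) : Phi (Finsupp.single q c) = c • gen q.1 q.2 := by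
  unfold Phi
  exact Finsupp.liftAddHom_apply_single (α := ℕ × A) (M := ℤ) (N := Gt A) genHom q c

lemma Phi_surjective (α : Gt A) : ∃ f : (ℕ × A) →₀ ℤ, Phi f = α := by
  refine FreeAbelianGroup.induction_on α ⟨0, map_zero _⟩ ?_ ?_ ?_
  · intro x
    refine ⟨Finsupp.single (x.1, (x.2 : A)) 1, ?_⟩
    rw [Phi_single, one_zsmul, gen_ne _ x.2.2]
  · rintro x ⟨f, hf⟩
    exact ⟨-f, by rw [map_neg, hf]; exact rfl⟩
  · rintro x y ⟨f, hf⟩ ⟨g, hg⟩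
    exact ⟨f + g, by rw [map_add, hf, hg]; exact rfl⟩

lemma Phi_mapDomain (e : (ℕ × A) → (ℕ × A)) (f : (ℕ × A) →₀ ℤ) :
    Phi (Finsupp.mapDomain e f) = f.sum fun q c => c • gen (e q).1 (e q).2 := by
  rw [Phi_apply]
  exact Finsupp.sum_mapDomain_index_addMonoidHom (N := Gt A) (f := e) (s := f) genHom

lemma Phi_zsmul_eq (z : ℤ) (f : (ℕ × A) →₀ ℤ) :
    Phi (z • f) = z • Phi f := map_zsmul _ _ _

lemma etaT_Phi_apply (p : ℕ) (hp : p ≠ 0) (f : (ℕ × A) →₀ ℤ) (k : ℕ) :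
    etaT p A (Phi f) k
      = f.sum fun q c => c • (if q.1 ≤ k then (p : A) ^ q.1 * q.2 ^ p ^ (k - q.1) else 0) := by
  rw [Phi_apply, map_finsuppSum]
  rw [Finsupp.sum, Finsupp.sum, Finset.sum_apply]
  apply Finset.sum_congr rfl
  intro q _
  rw [map_zsmul]
  show ((f q) • etaT p A (gen q.1 q.2)) k = _
  rw [Pi.smul_apply, etaT_gen_apply hp]

end Phi

section IntLemmas

lemma pow_succ_lower (m t : ℕ) : m ^ t + t * m ^ (t - 1) ≤ (m + 1) ^ t := by
  induction t with
  | zero => simp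
  | succ t ih =>
    have key : t * m ^ t ≤ t * (m ^ (t - 1) * m) := by
      cases t with
      | zero => simp
      | succ s =>
        apply le_of_eq
        rw [Nat.succ_sub_one, ← pow_succ]
    have h2 : (m ^ t + t * m ^ (t - 1)) * (m + 1) ≤ (m + 1) ^ t * (m + 1) :=
      Nat.mul_le_mul_right _ ih
    calc m ^ (t + 1) + (t + 1) * m ^ (t + 1 - 1)
        = m ^ t * m + (t * m ^ t + m ^ t) := by
          rw [Nat.succ_sub_one, pow_succ]; ring
      _ ≤ m ^ t * m + (t * (m ^ (t - 1) * m) + m ^ t) := by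
          exact Nat.add_le_add_left (Nat.add_le_add_right key _) _
      _ ≤ m ^ t * m + (t * (m ^ (t - 1) * m) + m ^ t) + t * m ^ (t - 1) := Nat.le_add_right _ _
      _ = (m ^ t + t * m ^ (t - 1)) * (m + 1) := by ring
      _ ≤ (m + 1) ^ t * (m + 1) := h2
      _ = (m + 1) ^ (t + 1) := (pow_succ _ _).symm

lemma growth (p : ℕ) (hp : 2 ≤ p) (C m M : ℕ) (h1 : 0 < m) (h2 : m < M) :
    ∃ k : ℕ, C * m ^ p ^ k < M ^ p ^ k := by
  refine ⟨C * m, ?_⟩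
  set t := p ^ (C * m) with ht
  have htCm : C * m < t := lt_of_lt_of_le (Nat.lt_two_pow_self) (Nat.pow_le_pow_left hp _)
  have ht1 : 1 ≤ t := le_trans (Nat.le_add_left 1 (C * m)) htCm
  have hmt : m ^ t = m ^ (t - 1) * m := by
    conv_lhs => rw [← Nat.sub_add_cancel ht1]
    rw [pow_succ]
  have hpos : 0 < m ^ (t - 1) := Nat.pow_pos h1
  calc C * m ^ t = C * m * m ^ (t - 1) := by rw [hmt]; ring
    _ < t * m ^ (t - 1) := by exact (Nat.mul_lt_mul_right hpos).mpr htCm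
    _ ≤ m ^ t + t * m ^ (t - 1) := Nat.le_add_left _ _
    _ ≤ (m + 1) ^ t := pow_succ_lower m t
    _ ≤ M ^ t := Nat.pow_le_pow_left h2 t

/-- The key analytic fact: in a vanishing linear combination of sequences `k ↦ v^(p^k)`
with the `v`'s distinct nonzero integers, the coefficient of a `v` of maximal absolute
value equals the coefficient of `-v` (zero if absent). -/
lemma int_max_coeff {α : Type*} (p : ℕ) (hp2 : 2 ≤ p) (hodd : Odd p) (s : Finset α)
    (E : α → ℤ) (c : α → ℤ)
    (hinj : ∀ a ∈ s, ∀ b ∈ s, E a = E b → a = b)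
    (hnz : ∀ a ∈ s, E a ≠ 0)
    (hrel : ∀ k : ℕ, ∑ a ∈ s, c a * E a ^ p ^ k = 0)
    (a₀ : α) (ha₀ : a₀ ∈ s)
    (hmax : ∀ a ∈ s, (E a).natAbs ≤ (E a₀).natAbs) :
    c a₀ = ∑ b ∈ s.filter (fun b => E b = -E a₀), c b := by
  classical
  set D : ℤ := ∑ b ∈ s.filter (fun b => E b = -E a₀), c b with hD
  set s' : Finset α := s.filter (fun b => E b ≠ E a₀ ∧ E b ≠ -E a₀) with hs'
  have hEa₀ : E a₀ ≠ 0 := hnz a₀ ha₀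
  have hne : E a₀ ≠ -E a₀ := by
    intro h; apply hEa₀; omega
  -- split of the relation
  have hsplit : ∀ k : ℕ,
      (c a₀ - D) * E a₀ ^ p ^ k + ∑ b ∈ s', c b * E b ^ p ^ k = 0 := by
    intro k
    have hoddt : Odd (p ^ k) := hodd.pow
    have e0 : s.filter (fun b => E b = E a₀) = {a₀} := by
      ext b
      simp only [Finset.mem_filter, Finset.mem_singleton]
      constructor
      · rintro ⟨hb, he⟩; exact hinj b hb a₀ ha₀ he
      · rintro rfl; exact ⟨ha₀, rfl⟩
    have e1 : (s.filter (fun b => ¬E b = E a₀)).filter (fun b => E b = -E a₀)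
        = s.filter (fun b => E b = -E a₀) := by
      rw [Finset.filter_filter]
      apply Finset.filter_congr
      intro b _
      constructor
      · rintro ⟨_, h⟩; exact h
      · intro h; exact ⟨by rw [h]; exact fun hh => hne hh.symm, h⟩
    have e2 : (s.filter (fun b => ¬E b = E a₀)).filter (fun b => ¬E b = -E a₀) = s' := by
      rw [Finset.filter_filter, hs']
    have h3 := hrel k
    rw [← Finset.sum_filter_add_sum_filter_not s (fun b => E b = E a₀)
      (fun b => c b * E b ^ p ^ k)] at h3
    rw [← Finset.sum_filter_add_sum_filter_not (s.filter (fun b => ¬E b = E a₀))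
      (fun b => E b = -E a₀) (fun b => c b * E b ^ p ^ k)] at h3
    rw [e0, e1, e2, Finset.sum_singleton] at h3
    have e3 : ∑ b ∈ s.filter (fun b => E b = -E a₀), c b * E b ^ p ^ k
        = -(D * E a₀ ^ p ^ k) := by
      rw [hD, Finset.sum_mul, ← Finset.sum_neg_distrib]
      apply Finset.sum_congr rfl
      intro b hb
      have he : E b = -E a₀ := (Finset.mem_filter.mp hb).2
      rw [he, hoddt.neg_pow]
      ring
    rw [e3] at h3
    have : (c a₀ - D) * E a₀ ^ p ^ k + ∑ b ∈ s', c b * E b ^ p ^ k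
        = c a₀ * E a₀ ^ p ^ k + (-(D * E a₀ ^ p ^ k) + ∑ b ∈ s', c b * E b ^ p ^ k) := by
      ring
    rw [this, h3]
  -- now bound the residual sum
  rcases Finset.eq_empty_or_nonempty s' with he | hne'
  · have h0 := hsplit 0
    rw [he, Finset.sum_empty, add_zero, mul_eq_zero] at h0
    rcases h0 with h0 | h0
    · omega
    · exact absurd h0 (pow_ne_zero _ hEa₀)
  · set M : ℕ := (E a₀).natAbs with hM
    set m : ℕ := s'.sup (fun b => (E b).natAbs) with hm
    have hs'sub : ∀ b ∈ s', b ∈ s := fun b hb => (Finset.mem_filter.mp hb).1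
    have hm1 : 0 < m := by
      obtain ⟨b, hb⟩ := hne'
      have : (E b).natAbs ≤ m := Finset.le_sup (f := fun b => (E b).natAbs) hb
      have hb0 : E b ≠ 0 := hnz b (hs'sub b hb)
      omega
    have hmM : m < M := by
      obtain ⟨b, hb, hbe⟩ := Finset.exists_mem_eq_sup s' hne' (fun b => (E b).natAbs)
      rw [hm, hbe]
      have hle : (E b).natAbs ≤ M := hmax b (hs'sub b hb)
      rcases lt_or_eq_of_le hle with h | h
      · exact h
      · exfalso
        have := Int.natAbs_eq_natAbs_iff.mp h
        rcases (Finset.mem_filter.mp hb).2 with ⟨h1, h2⟩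
        rcases this with h | h
        · exact h1 h
        · exact h2 h
    set C : ℕ := ∑ b ∈ s', (c b).natAbs with hC
    obtain ⟨k, hk⟩ := growth p hp2 C m M hm1 hmM
    have hb1 : ((c a₀ - D) * E a₀ ^ p ^ k).natAbs = (c a₀ - D).natAbs * M ^ p ^ k := by
      rw [Int.natAbs_mul, Int.natAbs_pow]
    have hble : (∑ b ∈ s', c b * E b ^ p ^ k).natAbs ≤ C * m ^ p ^ k := by
      calc (∑ b ∈ s', c b * E b ^ p ^ k).natAbs
          ≤ ∑ b ∈ s', (c b * E b ^ p ^ k).natAbs := by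
            have h := Finset.abs_sum_le_sum_abs (fun b => c b * E b ^ p ^ k) s'
            zify
            exact h
        _ ≤ ∑ b ∈ s', (c b).natAbs * m ^ p ^ k := by
            apply Finset.sum_le_sum
            intro b hb
            rw [Int.natAbs_mul, Int.natAbs_pow]
            exact Nat.mul_le_mul_left _ (Nat.pow_le_pow_left (Finset.le_sup (f := fun b => (E b).natAbs) hb) _)
        _ = C * m ^ p ^ k := by rw [hC, Finset.sum_mul]
    have heq := hsplit k
    have heq2 : (c a₀ - D) * E a₀ ^ p ^ k = -(∑ b ∈ s', c b * E b ^ p ^ k) := by omega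
    have : (c a₀ - D).natAbs * M ^ p ^ k ≤ C * m ^ p ^ k := by
      rw [← hb1, heq2, Int.natAbs_neg]
      exact hble
    by_contra hcon
    have h1 : 1 ≤ (c a₀ - D).natAbs := by
      have : c a₀ - D ≠ 0 := fun h => hcon (by omega)
      omega
    have : M ^ p ^ k ≤ (c a₀ - D).natAbs * M ^ p ^ k := Nat.le_mul_of_pos_left _ h1
    omega

end IntLemmas

section Eval

lemma exists_eval {S : Type*} (T : Finset (MvPolynomial S ℤ)) (hT : ∀ a ∈ T, a ≠ 0) :
    ∃ v : S → ℤ, ∀ a ∈ T, MvPolynomial.eval v a ≠ 0 := by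
  classical
  have hP : (∏ a ∈ T, a) ≠ 0 := Finset.prod_ne_zero_iff.mpr hT
  have h2 : ¬ ∀ v : S → ℤ, MvPolynomial.eval v (∏ a ∈ T, a) = 0 := by
    intro h
    exact hP (MvPolynomial.funext fun v => by rw [h v, map_zero])
  push_neg at h2
  obtain ⟨v, hv⟩ := h2
  refine ⟨v, fun a ha h0 => hv ?_⟩
  rw [map_prod]
  exact Finset.prod_eq_zero ha h0

end Eval

section Base

variable {S : Type*}

local notation "A" => MvPolynomial S ℤ

lemma base_zero (p : ℕ) (hp2 : 2 ≤ p) (hodd : Odd p) :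
    ∀ (n : ℕ) (u : A →₀ ℤ), u.support.card ≤ n → (0 : A) ∉ u.support →
      (∀ k : ℕ, (u.sum fun a c => c • a ^ p ^ k) = 0) →
      (u.sum fun a c => c • gen 0 a) ∈ HA p A := by
  intro n
  induction n with
  | zero =>
    intro u hcard _ _
    have : u = 0 := by
      have := Finset.card_eq_zero.mp (Nat.le_zero.mp hcard)
      exact Finsupp.support_eq_empty.mp this
    subst this
    rw [Finsupp.sum_zero_index]
    exact zero_mem _
  | succ n ih =>
    intro u hcard h0 hg
    rcases eq_or_ne u 0 with rfl | hu
    · rw [Finsupp.sum_zero_index]; exact zero_mem _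
    have hsupp : u.support.Nonempty := Finsupp.support_nonempty_iff.mpr hu
    -- choose an integral evaluation point separating the elements of the support
    set T : Finset A := (((u.support ×ˢ u.support).image (fun q => q.1 - q.2) ∪
                         (u.support ×ˢ u.support).image (fun q => q.1 + q.2)) ∪
                         u.support).filter (fun a => a ≠ 0) with hT
    obtain ⟨v, hv⟩ := exists_eval T (fun a ha => (Finset.mem_filter.mp ha).2)
    set E : A → ℤ := fun a => MvPolynomial.eval v a with hE
    have hanz : ∀ a ∈ u.support, a ≠ (0 : A) := by
      intro a ha h; rw [h] at ha; exact h0 ha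
    have hEnz : ∀ a ∈ u.support, E a ≠ 0 := by
      intro a ha
      apply hv
      rw [hT, Finset.mem_filter]
      exact ⟨Finset.mem_union.mpr (Or.inr ha), hanz a ha⟩
    have hEinj : ∀ a ∈ u.support, ∀ b ∈ u.support, E a = E b → a = b := by
      intro a ha b hb he
      by_contra hab
      have hmem : a - b ∈ T := by
        rw [hT, Finset.mem_filter]
        constructor
        · refine Finset.mem_union.mpr (Or.inl (Finset.mem_union.mpr (Or.inl ?_)))
          exact Finset.mem_image.mpr ⟨(a, b), Finset.mem_product.mpr ⟨ha, hb⟩, rfl⟩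
        · exact sub_ne_zero.mpr hab
      apply hv _ hmem
      rw [map_sub]
      rw [hE] at he
      simp only [he, sub_self]
    have hEadd : ∀ a ∈ u.support, ∀ b ∈ u.support, a + b ≠ 0 → E a + E b ≠ 0 := by
      intro a ha b hb hab
      have hmem : a + b ∈ T := by
        rw [hT, Finset.mem_filter]
        constructor
        · refine Finset.mem_union.mpr (Or.inl (Finset.mem_union.mpr (Or.inr ?_)))
          exact Finset.mem_image.mpr ⟨(a, b), Finset.mem_product.mpr ⟨ha, hb⟩, rfl⟩
        · exact hab
      intro hcon
      apply hv _ hmem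
      rw [map_add]
      exact hcon
    -- the integral relations
    have hrel : ∀ k : ℕ, ∑ a ∈ u.support, u a * (E a) ^ p ^ k = 0 := by
      intro k
      have h1 := congrArg (MvPolynomial.eval v) (hg k)
      rw [map_zero, Finsupp.sum, map_sum] at h1
      rw [← h1]
      apply Finset.sum_congr rfl
      intro a _
      rw [zsmul_eq_mul, map_mul, map_pow, map_intCast]
      simp [hE]
    -- choose an element of maximal absolute value
    obtain ⟨a₀, ha₀, hmax⟩ := Finset.exists_max_image u.support (fun a => (E a).natAbs) hsupp
    have hkey := int_max_coeff p hp2 hodd u.support E (fun a => u a) hEinj hEnz hrel a₀ ha₀ hmax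
    -- the filtered sum is `u (-a₀)`
    have hfe : ∑ b ∈ u.support.filter (fun b => E b = -E a₀), u b = u (-a₀) := by
      by_cases hneg : -a₀ ∈ u.support
      · have : u.support.filter (fun b => E b = -E a₀) = {-a₀} := by
          ext b
          simp only [Finset.mem_filter, Finset.mem_singleton]
          constructor
          · rintro ⟨hb, he⟩
            by_contra hbne
            have hsum : E b + E a₀ = 0 := by rw [he]; ring
            have : b + a₀ ≠ 0 := fun h => hbne (by linear_combination h)
            exact hEadd b hb a₀ ha₀ this hsum
          · rintro rfl
            refine ⟨hneg, ?_⟩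
            rw [hE]; simp only [map_neg]
        rw [this, Finset.sum_singleton]
      · have h1 : u (-a₀) = 0 := Finsupp.notMem_support_iff.mp hneg
        rw [h1]
        apply Finset.sum_eq_zero
        intro b hb
        exfalso
        rcases Finset.mem_filter.mp hb with ⟨hbs, he⟩
        have hsum : E b + E a₀ = 0 := by rw [he]; ring
        have hbne : b ≠ -a₀ := fun h => hneg (h ▸ hbs)
        have : b + a₀ ≠ 0 := fun h => hbne (by linear_combination h)
        exact hEadd b hbs a₀ ha₀ this hsum
    have huv : u (-a₀) = u a₀ := by rw [← hfe]; exact hkey.symm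
    have hne0 : u a₀ ≠ 0 := Finsupp.mem_support_iff.mp ha₀
    have hnegmem : -a₀ ∈ u.support := Finsupp.mem_support_iff.mpr (by rw [huv]; exact hne0)
    have hnegne : -a₀ ≠ a₀ := by
      intro h
      have h1 : E (-a₀) = E a₀ := by rw [h]
      have h2 : E (-a₀) = -E a₀ := by rw [hE]; simp only [map_neg]
      have := hEnz a₀ ha₀
      omega
    -- the descent
    set u' : A →₀ ℤ := (u.erase a₀).erase (-a₀) with hu'def
    have hdec : u = u' + Finsupp.single (-a₀) (u a₀) + Finsupp.single a₀ (u a₀) := by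
      have e2 : (u.erase a₀) (-a₀) = u (-a₀) := Finsupp.erase_ne hnegne
      have e1 : u' + Finsupp.single (-a₀) (u a₀) = u.erase a₀ := by
        have h := Finsupp.erase_add_single (-a₀) (u.erase a₀)
        rwa [e2, huv, ← hu'def] at h
      calc u = u.erase a₀ + Finsupp.single a₀ (u a₀) := (Finsupp.erase_add_single _ _).symm
        _ = u' + Finsupp.single (-a₀) (u a₀) + Finsupp.single a₀ (u a₀) := by rw [← e1]
    have hsub : u'.support ⊆ u.support := by
      intro b hb
      rw [hu'def] at hb
      rw [Finsupp.support_erase] at hb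
      have hb2 := Finset.mem_of_mem_erase hb
      rw [Finsupp.support_erase] at hb2
      exact Finset.mem_of_mem_erase hb2
    have hcard' : u'.support.card ≤ n := by
      have e1 : u'.support = ((u.support.erase a₀).erase (-a₀)) := by
        rw [hu'def, Finsupp.support_erase, Finsupp.support_erase]
      rw [e1]
      calc ((u.support.erase a₀).erase (-a₀)).card ≤ (u.support.erase a₀).card :=
            Finset.card_erase_le
        _ = u.support.card - 1 := Finset.card_erase_of_mem ha₀
        _ ≤ n := by omega
    have h0' : (0 : A) ∉ u'.support := fun h => h0 (hsub h)
    -- the two decomposition identities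
    have hzero1 : ∀ (k : ℕ) (a : A), (0 : ℤ) • a ^ p ^ k = 0 := fun k a => zero_zsmul _
    have hgdec : ∀ k : ℕ, (u.sum fun a c => c • a ^ p ^ k)
        = (u'.sum fun a c => c • a ^ p ^ k) + u a₀ • (-a₀) ^ p ^ k + u a₀ • a₀ ^ p ^ k := by
      intro k
      conv_lhs => rw [hdec]
      rw [Finsupp.sum_add_index' (h := fun (a : A) (c : ℤ) => c • a ^ p ^ k)
            (fun a => zero_zsmul _) (fun a b₁ b₂ => add_zsmul _ b₁ b₂),
          Finsupp.sum_add_index' (h := fun (a : A) (c : ℤ) => c • a ^ p ^ k)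
            (fun a => zero_zsmul _) (fun a b₁ b₂ => add_zsmul _ b₁ b₂),
          Finsupp.sum_single_index (h := fun (a : A) (c : ℤ) => c • a ^ p ^ k) (zero_zsmul _),
          Finsupp.sum_single_index (h := fun (a : A) (c : ℤ) => c • a ^ p ^ k) (zero_zsmul _)]
    have hg' : ∀ k : ℕ, (u'.sum fun a c => c • a ^ p ^ k) = 0 := by
      intro k
      have h1 := hg k
      rw [hgdec k] at h1
      have hpow : (-a₀ : A) ^ p ^ k = -(a₀ ^ p ^ k) := (hodd.pow).neg_pow a₀
      rw [hpow] at h1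
      have : u a₀ • -(a₀ ^ p ^ k) + u a₀ • a₀ ^ p ^ k = 0 := by
        rw [smul_neg]; ring
      -- h1 : u'.sum + u a₀ • -(a₀^p^k) + u a₀ • a₀^p^k = 0
      calc (u'.sum fun a c => c • a ^ p ^ k)
          = (u'.sum fun a c => c • a ^ p ^ k)
            + (u a₀ • -(a₀ ^ p ^ k) + u a₀ • a₀ ^ p ^ k) := by rw [this, add_zero]
        _ = 0 := by rw [← add_assoc]; exact h1
    have hmem' := ih u' hcard' h0' hg'
    -- decomposition at the level of `G̃(A)`
    have hPdec : (u.sum fun a c => c • gen 0 a)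
        = (u'.sum fun a c => c • gen 0 a) + u a₀ • (gen 0 (-a₀) + gen 0 a₀) := by
      conv_lhs => rw [hdec]
      rw [Finsupp.sum_add_index' (h := fun (a : A) (c : ℤ) => c • gen 0 a)
            (fun a => zero_zsmul _) (fun a b₁ b₂ => add_zsmul _ b₁ b₂),
          Finsupp.sum_add_index' (h := fun (a : A) (c : ℤ) => c • gen 0 a)
            (fun a => zero_zsmul _) (fun a b₁ b₂ => add_zsmul _ b₁ b₂),
          Finsupp.sum_single_index (h := fun (a : A) (c : ℤ) => c • gen 0 a) (zero_zsmul _),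
          Finsupp.sum_single_index (h := fun (a : A) (c : ℤ) => c • gen 0 a) (zero_zsmul _),
          smul_add]
      ring_nf
      abel
    rw [hPdec]
    apply AddSubgroup.add_mem
    · exact hmem'
    · apply AddSubgroup.zsmul_mem
      have := sign_rel_mem p 0 (-a₀)
      rwa [neg_neg] at this

end Base

section MainAux

/-- `c ↦ c • x` as an `AddMonoidHom` from `ℤ`. -/
noncomputable def smulHom {M : Type*} [AddCommGroup M] (x : M) : ℤ →+ M :=
  AddMonoidHom.mk' (fun c => c • x) (fun c d => add_zsmul x c d)

lemma sum_mapDomain_smul {α β M : Type*} [AddCommGroup M] (e : α → β) (f : α →₀ ℤ)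
    (F : β → M) :
    ((Finsupp.mapDomain e f).sum fun b c => c • F b) = f.sum fun a c => c • F (e a) :=
  Finsupp.sum_mapDomain_index_addMonoidHom (f := e) (s := f) (fun b => smulHom (F b))

lemma Vmap_eq_zero {A : Type*} [CommRing A] [NoZeroDivisors A] {p : ℕ}
    (hpA : (p : A) ≠ 0) {r : ℕ → A} (h : Vmap p r = 0) : r = 0 := by
  funext m
  have h1 : Vmap p r (m + 1) = 0 := congrFun h (m + 1)
  have h2 : (p : A) * r m = 0 := h1
  rcases mul_eq_zero.mp h2 with h3 | h3
  · exact absurd h3 hpA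
  · exact h3

end MainAux

section Main

variable {S : Type*}

local notation "A" => MvPolynomial S ℤ

lemma main_lemma (p : ℕ) (hp2 : 2 ≤ p) (hodd : Odd p) :
    ∀ (N : ℕ) (f : (ℕ × A) →₀ ℤ), (∀ q ∈ f.support, q.1 ≤ N) →
      etaT p A (Phi f) = 0 → (p ^ N) • Phi f ∈ HA p A := by
  have hp0 : p ≠ 0 := by omega
  have hpA : ((p : ℕ) : A) ≠ 0 := by
    have h1 : ((p : ℕ) : A) = MvPolynomial.C ((p : ℕ) : ℤ) := by
      rw [map_natCast]
    rw [h1, Ne, MvPolynomial.C_eq_zero]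
    exact_mod_cast hp0
  intro N
  induction N with
  | zero =>
    intro f hlev hker
    rw [pow_zero, one_nsmul]
    set w : A →₀ ℤ := Finsupp.mapDomain Prod.snd f with hw
    set u : A →₀ ℤ := w.erase 0 with hu
    have edec : w = Finsupp.single 0 (w 0) + u := (Finsupp.single_add_erase _ _).symm
    have e1 : Phi f = w.sum fun a c => c • gen 0 a := by
      rw [Phi_apply, hw, sum_mapDomain_smul Prod.snd f (fun a => gen 0 a)]
      apply Finsupp.sum_congr
      intro q hq
      have h1 : q.1 = 0 := Nat.le_zero.mp (hlev q hq)
      rw [h1]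
    have e2 : (w.sum fun a c => c • gen 0 a) = u.sum fun a c => c • gen 0 a := by
      conv_lhs => rw [edec]
      rw [Finsupp.sum_add_index' (h := fun (a : A) (c : ℤ) => c • gen 0 a)
            (fun a => zero_zsmul _) (fun a b₁ b₂ => add_zsmul _ b₁ b₂),
          Finsupp.sum_single_index (h := fun (a : A) (c : ℤ) => c • gen 0 a) (zero_zsmul _),
          gen_zero, smul_zero, zero_add]
    have hg : ∀ k, (u.sum fun a c => c • a ^ p ^ k) = 0 := by
      intro k
      have h2 : (f.sum fun q c =>
          c • (if q.1 ≤ k then (p : A) ^ q.1 * q.2 ^ p ^ (k - q.1) else 0)) = 0 := by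
        rw [← etaT_Phi_apply p hp0 f k, hker]; rfl
      have h3 : (f.sum fun q c => c • q.2 ^ p ^ k) = 0 := by
        rw [← h2]
        apply Finsupp.sum_congr
        intro q hq
        have h1 : q.1 = 0 := Nat.le_zero.mp (hlev q hq)
        rw [h1]
        simp
      have h4 : (w.sum fun a c => c • a ^ p ^ k) = 0 := by
        rw [hw, sum_mapDomain_smul Prod.snd f (fun a => a ^ p ^ k)]
        exact h3
      have h5 : (w.sum fun a c => c • a ^ p ^ k)
          = w 0 • (0 : A) ^ p ^ k + u.sum fun a c => c • a ^ p ^ k := by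
        conv_lhs => rw [edec]
        rw [Finsupp.sum_add_index' (h := fun (a : A) (c : ℤ) => c • a ^ p ^ k)
              (fun a => zero_zsmul _) (fun a b₁ b₂ => add_zsmul _ b₁ b₂),
            Finsupp.sum_single_index (h := fun (a : A) (c : ℤ) => c • a ^ p ^ k)
              (zero_zsmul _)]
      rw [h4] at h5
      rw [zero_pow (show p ^ k ≠ 0 from pow_ne_zero _ hp0), smul_zero, zero_add] at h5
      exact h5.symm
    have h0 : (0 : A) ∉ u.support := by
      rw [hu, Finsupp.support_erase]
      exact Finset.notMem_erase _ _
    rw [e1, e2]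
    exact base_zero p hp2 hodd _ u (le_refl _) h0 hg
  | succ N ih =>
    intro f hlev hker
    set f0 := f.filter (fun q => q.1 = 0) with hf0
    set fp := f.filter (fun q => ¬ q.1 = 0) with hfp
    have hsplit : f0 + fp = f := Finsupp.filter_pos_add_filter_neg f _
    have hsupp0 : ∀ q ∈ f0.support, q.1 = 0 := by
      intro q hq
      rw [hf0, Finsupp.support_filter] at hq
      exact (Finset.mem_filter.mp hq).2
    have hsuppp : ∀ q ∈ fp.support, q.1 ≠ 0 := by
      intro q hq
      rw [hfp, Finsupp.support_filter] at hq
      exact (Finset.mem_filter.mp hq).2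
    have hsupppf : ∀ q ∈ fp.support, q ∈ f.support := by
      intro q hq
      rw [hfp, Finsupp.support_filter] at hq
      exact (Finset.mem_filter.mp hq).1
    -- the coordinate-0 relation
    have hco : (f.sum fun q c =>
        c • (if q.1 ≤ 0 then (p : A) ^ q.1 * q.2 ^ p ^ (0 - q.1) else 0)) = 0 := by
      rw [← etaT_Phi_apply p hp0 f 0, hker]; rfl
    have hg0 : (f0.sum fun q c => c • q.2) = 0 := by
      have h := hco
      conv_lhs at h => rw [← hsplit]
      rw [Finsupp.sum_add_index'
            (h := fun (q : ℕ × A) (c : ℤ) =>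
              c • (if q.1 ≤ 0 then (p : A) ^ q.1 * q.2 ^ p ^ (0 - q.1) else 0))
            (fun a => zero_zsmul _) (fun a b₁ b₂ => add_zsmul _ b₁ b₂)] at h
      have e0 : (f0.sum fun q c =>
          c • (if q.1 ≤ 0 then (p : A) ^ q.1 * q.2 ^ p ^ (0 - q.1) else 0))
          = f0.sum fun q c => c • q.2 := by
        apply Finsupp.sum_congr
        intro q hq
        rw [hsupp0 q hq]
        simp
      have e1 : (fp.sum fun q c =>
          c • (if q.1 ≤ 0 then (p : A) ^ q.1 * q.2 ^ p ^ (0 - q.1) else 0)) = 0 := by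
        have : (fp.sum fun q c =>
            c • (if q.1 ≤ 0 then (p : A) ^ q.1 * q.2 ^ p ^ (0 - q.1) else 0))
            = fp.sum fun _ _ => (0 : A) := by
          apply Finsupp.sum_congr
          intro q hq
          rw [if_neg (by have := hsuppp q hq; omega), smul_zero]
        rw [this, Finsupp.sum_fun_zero]
      rw [e0, e1, add_zero] at h
      exact h
    -- the w-relation combination lies in H(A)
    have hwmem : (f0.sum fun q c => c • wgen p 0 q.2) ∈ HA p A := by
      have h1 : ((Finsupp.mapDomain Prod.snd f0).sum fun a c => c • a) = 0 := by
        rw [sum_mapDomain_smul Prod.snd f0 (fun a => a)]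
        exact hg0
      have h2 := sum_wgen_mem p 0 _ h1
      rwa [sum_mapDomain_smul Prod.snd f0 (fun a => wgen p 0 a)] at h2
    -- the descended element
    set g := Finsupp.mapDomain (fun q : ℕ × A => ((0 : ℕ), q.2 ^ p)) f0
      + (p : ℤ) • Finsupp.mapDomain (fun q : ℕ × A => (q.1 - 1, q.2)) fp with hgdef
    have hPhig : sh (Phi g)
        = (f0.sum fun q c => c • gen (0 + 1) (q.2 ^ p)) + (p : ℕ) • Phi fp := by
      rw [hgdef, map_add, map_zsmul, map_add, map_zsmul]
      have e2 : sh (Phi (Finsupp.mapDomain (fun q : ℕ × A => ((0 : ℕ), q.2 ^ p)) f0))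
          = f0.sum fun q c => c • gen (0 + 1) (q.2 ^ p) := by
        rw [Phi_mapDomain, map_finsuppSum]
        apply Finsupp.sum_congr
        intro q _
        rw [map_zsmul, sh_gen]
      have e3 : sh (Phi (Finsupp.mapDomain (fun q : ℕ × A => (q.1 - 1, q.2)) fp))
          = Phi fp := by
        rw [Phi_mapDomain, map_finsuppSum, Phi_apply]
        apply Finsupp.sum_congr
        intro q hq
        rw [map_zsmul, sh_gen, show q.1 - 1 + 1 = q.1 from by have := hsuppp q hq; omega]
      rw [e2, e3, natCast_zsmul]
    have hpf0 : (p : ℕ) • Phi f0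
        = (f0.sum fun q c => c • gen (0 + 1) (q.2 ^ p))
          - (f0.sum fun q c => c • wgen p 0 q.2) := by
      rw [← Finsupp.sum_sub, Phi_apply, Finsupp.sum, Finsupp.sum, Finset.smul_sum]
      apply Finset.sum_congr rfl
      intro q hq
      rw [hsupp0 q hq, ← smul_sub, wgen, sub_sub_cancel, ← natCast_zsmul, ← natCast_zsmul,
        smul_smul, smul_smul, mul_comm]
    have hkey : (p : ℕ) • Phi f = sh (Phi g) - (f0.sum fun q c => c • wgen p 0 q.2) := by
      conv_lhs => rw [← hsplit]
      rw [map_add, smul_add, hpf0, hPhig]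
      abel
    -- the ghost map kills `Phi g`
    have hghost : etaT p A (Phi g) = 0 := by
      have h1 : etaT p A (sh (Phi g)) = 0 := by
        have h2 := congrArg (etaT p A) hkey
        rw [map_nsmul, hker, smul_zero, map_sub, etaT_HA hodd hwmem, sub_zero] at h2
        exact h2.symm
      rw [etaT_sh] at h1
      exact Vmap_eq_zero hpA h1
    -- the levels of `g` are bounded by `N`
    have hlevg : ∀ q ∈ g.support, q.1 ≤ N := by
      intro q hq
      rw [hgdef] at hq
      rcases Finset.mem_union.mp (Finsupp.support_add hq) with h | h
      · obtain ⟨q', _, rfl⟩ := Finset.mem_image.mp (Finsupp.mapDomain_support h)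
        omega
      · have h2 := Finsupp.support_smul h
        obtain ⟨q', hq', rfl⟩ := Finset.mem_image.mp (Finsupp.mapDomain_support h2)
        have h3 : q'.1 ≤ N + 1 := hlev q' (hsupppf q' hq')
        omega
    have hmem := ih g hlevg hghost
    -- conclude
    have hfin : (p ^ (N + 1)) • Phi f = p ^ N • ((p : ℕ) • Phi f) := by
      rw [pow_succ, mul_smul]
    rw [hfin, hkey, smul_sub]
    apply AddSubgroup.sub_mem
    · have h4 := sh_mem_HA p hmem
      rwa [map_nsmul] at h4
    · exact AddSubgroup.nsmul_mem _ hwmem _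

end Main

/-- For `p` an odd prime and `A` a polynomial ring over `ℤ`, the kernel of `η̃`
is exactly the `p`-saturation `H̃(A)` of `H(A)`. -/
theorem stmt_15 (p : ℕ) (hp : p.Prime) (hodd : p ≠ 2) (S : Type*) :
    ∀ α : Gt (MvPolynomial S ℤ),
      etaT p (MvPolynomial S ℤ) α = 0 ↔ ∃ l : ℕ, p ^ l • α ∈ HA p (MvPolynomial S ℤ) := by
  intro α
  have hoddp : Odd p := hp.odd_of_ne_two hodd
  constructor
  · intro h
    obtain ⟨f, rfl⟩ := Phi_surjective α
    exact ⟨f.support.sup Prod.fst,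
      main_lemma p hp.two_le hoddp _ f (fun q hq => Finset.le_sup (f := Prod.fst) hq) h⟩
  · rintro ⟨l, hl⟩
    have h0 := etaT_HA hoddp hl
    rw [map_nsmul] at h0
    funext k
    have h1 : (p ^ l : ℕ) • (etaT p (MvPolynomial S ℤ) α k) = 0 := by
      have := congrFun h0 k
      simpa using this
    have h2 : ((p ^ l : ℕ) : MvPolynomial S ℤ) * etaT p (MvPolynomial S ℤ) α k = 0 := by
      rw [← nsmul_eq_mul]; exact h1
    have h3 : ((p ^ l : ℕ) : MvPolynomial S ℤ) ≠ 0 :=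
      Nat.cast_ne_zero.mpr (pow_ne_zero _ hp.ne_zero)
    rcases mul_eq_zero.mp h2 with h4 | h4
    · exact absurd h4 h3
    · exact h4
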